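/- arXiv:1906.09392 — 2 statements merged into one kernel-verified Lean document; each statement's English description precedes it below -/
import Mathlib

section
/- For every N ≥ 1, every optimal palindromic decomposition of the prefix of the Thue-Morse word of length 4N is a 0-decomposition: if the prefix of t of length 4N equals a concatenation p_1⋯p_k of nonempty palindromes with k = PPL_t(4N), then the length of every p_i is divisible by 4 (equivalently, every palindrome in the factorization starts and ends at a position divisible by 4). -/
/-- The Thue–Morse word: `tm n` is the number of ones (sum of binary digits)
in the binary expansion of `n`, taken mod 2. -/
def tm (n : ℕ) : ℕ := (Nat.digits 2 n).sum % 2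

/-- `ps` is a factorization of the finite word `w` into nonempty palindromes. -/
def IsPalDecomp (w : List ℕ) (ps : List (List ℕ)) : Prop :=
  ps.flatten = w ∧ ∀ p ∈ ps, p ≠ [] ∧ p.Palindrome

/-- The palindromic length of a finite word: the least number of nonempty
palindromes whose concatenation is the word (0 for the empty word). -/
noncomputable def palLen (w : List ℕ) : ℕ :=
  sInf {k | ∃ ps, ps.length = k ∧ IsPalDecomp w ps}

/-- `pplTM n` is the palindromic length of the prefix of length `n`
of the Thue–Morse word. -/
noncomputable def pplTM (n : ℕ) : ℕ := palLen ((List.range n).map tm)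

/- ### Auxiliary material for the proof -/

namespace TMZeroDecomp

lemma tm_le (n : ℕ) : tm n ≤ 1 :=
  Nat.lt_succ_iff.mp (Nat.mod_lt _ (by norm_num))

lemma tm_even (n : ℕ) : tm (2 * n) = tm n := by
  rcases Nat.eq_zero_or_pos n with rfl | h
  · rfl
  · unfold tm
    rw [Nat.digits_def' (by norm_num : 1 < 2) (by omega : 0 < 2 * n)]
    have h1 : 2 * n % 2 = 0 := by omega
    have h2 : 2 * n / 2 = n := by omega
    rw [h1, h2, List.sum_cons, Nat.zero_add]

lemma tm_odd (n : ℕ) : tm (2 * n + 1) + tm (2 * n) = 1 := by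
  have h : tm (2 * n + 1) = (1 + (Nat.digits 2 n).sum) % 2 := by
    unfold tm
    rw [Nat.digits_def' (by norm_num : 1 < 2) (by omega : 0 < 2 * n + 1)]
    have h1 : (2 * n + 1) % 2 = 1 := by omega
    have h2 : (2 * n + 1) / 2 = n := by omega
    rw [h1, h2, List.sum_cons]
  have h2 : tm (2 * n) = (Nat.digits 2 n).sum % 2 := by
    rw [tm_even]; rfl
  omega

lemma tm4 (n : ℕ) : tm (4 * n) = tm n := by
  rw [show 4 * n = 2 * (2 * n) by ring, tm_even, tm_even]

lemma tm41 (n : ℕ) : tm (4 * n + 1) + tm n = 1 := by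
  have := tm_odd (2 * n)
  rw [show 2 * (2 * n) = 4 * n by ring] at this
  have := tm4 n
  omega

lemma tm42 (n : ℕ) : tm (4 * n + 2) + tm n = 1 := by
  have h1 : tm (4 * n + 2) = tm (2 * n + 1) := by
    rw [show 4 * n + 2 = 2 * (2 * n + 1) by ring, tm_even]
  have h2 := tm_odd n
  have h3 := tm_even n
  omega

lemma tm43 (n : ℕ) : tm (4 * n + 3) = tm n := by
  have h1 := tm_odd (2 * n + 1)
  rw [show 2 * (2 * n + 1) + 1 = 4 * n + 3 by ring,
      show 2 * (2 * n + 1) = 4 * n + 2 by ring] at h1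
  have h2 := tm42 n
  have h3 := tm_le n
  have h4 := tm_le (4 * n + 3)
  omega

lemma tm_pair (n : ℕ) : tm (4 * n + 1) = tm (4 * n + 2) := by
  have := tm41 n; have := tm42 n; omega

lemma tm_outer (n : ℕ) : tm (4 * n) = tm (4 * n + 3) := by
  rw [tm4, tm43]

lemma adj_odd (m : ℕ) (h : tm m = tm (m + 1)) : m % 2 = 1 := by
  by_contra hc
  obtain ⟨k, rfl⟩ : ∃ k, m = 2 * k := ⟨m / 2, by omega⟩
  have := tm_odd k
  omega

/-- Index-level palindromicity of the factor `t[u..u+l)` of the Thue–Morse word. -/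
def PalI (u l : ℕ) : Prop := ∀ k, k < l → tm (u + k) = tm (u + (l - 1 - k))

lemma even_center (u l : ℕ) (hp : PalI u l) (h2 : l % 2 = 0) (hl : 2 ≤ l) :
    (2 * u + l) % 4 = 0 := by
  have hk := hp (l / 2) (by omega)
  have hidx : u + (l - 1 - l / 2) = u + l / 2 - 1 := by omega
  rw [hidx] at hk
  have hodd : (u + l / 2 - 1) % 2 = 1 := by
    apply adj_odd
    rw [show u + l / 2 - 1 + 1 = u + l / 2 by omega]
    exact hk.symm
  omega

lemma no_odd (u l : ℕ) (hp : PalI u l) (h1 : l % 2 = 1) (h5 : 5 ≤ l) : False := by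
  set c := (l - 1) / 2 with hc
  have hc2 : 2 ≤ c := by omega
  have e1 : tm (u + (c - 1)) = tm (u + (c + 1)) := by
    have h := hp (c - 1) (by omega)
    have hi : u + (l - 1 - (c - 1)) = u + (c + 1) := by omega
    rwa [hi] at h
  have e2 : tm (u + (c - 2)) = tm (u + (c + 2)) := by
    have h := hp (c - 2) (by omega)
    have hi : u + (l - 1 - (c - 2)) = u + (c + 2) := by omega
    rwa [hi] at h
  set m := u + c with hm
  have hm2 : 2 ≤ m := by omega
  clear_value c
  have e1' : tm (m - 1) = tm (m + 1) := by
    rw [show m - 1 = u + (c - 1) by omega, show m + 1 = u + (c + 1) by omega]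
    exact e1
  have e2' : tm (m - 2) = tm (m + 2) := by
    rw [show m - 2 = u + (c - 2) by omega, show m + 2 = u + (c + 2) by omega]
    exact e2
  clear_value m
  by_cases hpar : m % 2 = 0
  · obtain ⟨p, rfl⟩ : ∃ p, m = 2 * p := ⟨m / 2, by omega⟩
    have hp1 : 1 ≤ p := by omega
    rw [show 2 * p - 1 = 2 * (p - 1) + 1 by omega] at e1'
    rw [show 2 * p - 2 = 2 * (p - 1) by omega,
        show 2 * p + 2 = 2 * (p + 1) by omega] at e2'
    have A := tm_odd (p - 1)
    have B := tm_even (p - 1)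
    have C := tm_odd p
    have D := tm_even p
    have E := tm_even (p + 1)
    -- tm (p-1) = tm p and tm (p-1) = tm (p+1)
    have g1 : tm (p - 1) = tm p := by omega
    have g2 : tm (p - 1) = tm (p + 1) := by omega
    have o1 : (p - 1) % 2 = 1 := by
      apply adj_odd; rw [show p - 1 + 1 = p by omega]; exact g1
    have o2 : p % 2 = 1 := by
      apply adj_odd; omega
    omega
  · obtain ⟨p, rfl⟩ : ∃ p, m = 2 * p + 1 := ⟨m / 2, by omega⟩
    have hp1 : 1 ≤ p := by omega
    rw [show 2 * p + 1 - 1 = 2 * p by omega,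
        show 2 * p + 1 + 1 = 2 * (p + 1) by omega] at e1'
    rw [show 2 * p + 1 - 2 = 2 * (p - 1) + 1 by omega,
        show 2 * p + 1 + 2 = 2 * (p + 1) + 1 by omega] at e2'
    have A := tm_odd (p - 1)
    have B := tm_even (p - 1)
    have C := tm_odd (p + 1)
    have D := tm_even p
    have E := tm_even (p + 1)
    have g1 : tm p = tm (p + 1) := by omega
    have g2 : tm (p - 1) = tm (p + 1) := by omega
    have o1 : (p - 1) % 2 = 1 := by
      apply adj_odd; rw [show p - 1 + 1 = p by omega]; omega
    have o2 : p % 2 = 1 := adj_odd p g1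
    omega

lemma no3 (u : ℕ) (hp : PalI u 3) (h : u % 4 = 0 ∨ u % 4 = 1) : False := by
  have h0 := hp 0 (by norm_num)
  rw [show u + 0 = u by omega, show u + (3 - 1 - 0) = u + 2 by omega] at h0
  rcases h with h | h
  · obtain ⟨n, rfl⟩ : ∃ n, u = 4 * n := ⟨u / 4, by omega⟩
    have h1 := tm4 n
    have h2 := tm42 n
    have h3 := tm_le n
    omega
  · obtain ⟨n, rfl⟩ : ∃ n, u = 4 * n + 1 := ⟨u / 4, by omega⟩
    rw [show 4 * n + 1 + 2 = 4 * n + 3 by omega] at h0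
    have h1 := tm41 n
    have h2 := tm43 n
    have h3 := tm_le n
    omega

lemma palI_trim (u l d : ℕ) (hp : PalI u l) (hd : 2 * d ≤ l) :
    PalI (u + d) (l - 2 * d) := by
  intro k hk
  rw [show u + d + k = u + (d + k) by omega,
      show u + d + (l - 2 * d - 1 - k) = u + (l - 1 - (d + k)) by omega]
  exact hp (d + k) (by omega)

lemma palI_extend (u l : ℕ) (hu : 1 ≤ u) (hp : PalI u l)
    (he : tm (u - 1) = tm (u + l)) : PalI (u - 1) (l + 2) := by
  intro k hk
  rcases Nat.eq_zero_or_pos k with rfl | hk0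
  · rw [show u - 1 + 0 = u - 1 by omega,
        show u - 1 + (l + 2 - 1 - 0) = u + l by omega]
    exact he
  · rcases Nat.lt_or_ge k (l + 1) with hk1 | hk1
    · rw [show u - 1 + k = u + (k - 1) by omega,
          show u - 1 + (l + 2 - 1 - k) = u + (l - 1 - (k - 1)) by omega]
      exact hp (k - 1) (by omega)
    · have hk2 : k = l + 1 := by omega
      subst hk2
      rw [show u - 1 + (l + 1) = u + l by omega,
          show u - 1 + (l + 2 - 1 - (l + 1)) = u - 1 by omega]
      exact he.symm

lemma palI_block (n : ℕ) : PalI (4 * n) 4 := by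
  intro k hk
  interval_cases k
  · rw [show 4 * n + 0 = 4 * n by omega, show 4 * n + (4 - 1 - 0) = 4 * n + 3 by omega]
    exact tm_outer n
  · rw [show 4 * n + (4 - 1 - 1) = 4 * n + 2 by omega]
    exact tm_pair n
  · rw [show 4 * n + (4 - 1 - 2) = 4 * n + 1 by omega]
    exact (tm_pair n).symm
  · rw [show 4 * n + (4 - 1 - 3) = 4 * n by omega]
    exact (tm_outer n).symm

lemma ext13 (u l : ℕ) (hu : u % 4 = 1) (hl : l % 4 = 2) (hp : PalI u l) :
    PalI (u - 1) (l + 2) := by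
  apply palI_extend u l (by omega) hp
  obtain ⟨n, rfl⟩ : ∃ n, u = 4 * n + 1 := ⟨u / 4, by omega⟩
  rw [show 4 * n + 1 - 1 = 4 * n by omega]
  rcases (show l = 2 ∨ 6 ≤ l by omega) with rfl | h6
  · rw [show 4 * n + 1 + 2 = 4 * n + 3 by omega]
    exact tm_outer n
  · have h3 := hp 2 (by omega)
    obtain ⟨m, hm⟩ : ∃ m, 4 * n + 1 + (l - 1 - 2) = 4 * m := ⟨n + (l - 2) / 4, by omega⟩
    rw [hm, show 4 * n + 1 + 2 = 4 * n + 3 by omega] at h3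
    have h4 := tm_outer m
    rw [show 4 * m + 3 = 4 * n + 1 + l by omega] at h4
    rw [tm_outer n, h3, h4]

lemma ext22 (u l : ℕ) (hu : u % 4 = 2) (hl : l % 4 = 0) (hl1 : 1 ≤ l) (hp : PalI u l) :
    PalI (u - 2) (l + 4) := by
  have step1 : PalI (u - 1) (l + 2) := by
    apply palI_extend u l (by omega) hp
    obtain ⟨n, rfl⟩ : ∃ n, u = 4 * n + 2 := ⟨u / 4, by omega⟩
    rw [show 4 * n + 2 - 1 = 4 * n + 1 by omega]
    have h1 := tm_pair n
    have h2 := hp 0 (by omega)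
    obtain ⟨m, hm⟩ : ∃ m, 4 * n + 2 + (l - 1 - 0) = 4 * m + 1 := ⟨n + l / 4, by omega⟩
    rw [hm, show 4 * n + 2 + 0 = 4 * n + 2 by omega] at h2
    have h3 := tm_pair m
    rw [show 4 * m + 2 = 4 * n + 2 + l by omega] at h3
    rw [h1, h2, h3]
  have h := ext13 (u - 1) (l + 2) (by omega) (by omega) step1
  rw [show u - 1 - 1 = u - 2 by omega] at h
  exact h

/- ### Bridge between list palindromes and `PalI` -/

/-- The factor `t[u..u+l)` as a list. -/
def seg (u l : ℕ) : List ℕ := (List.range' u l).map tm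

lemma seg_length (u l : ℕ) : (seg u l).length = l := by simp [seg]

lemma seg_append (u a b : ℕ) : seg u a ++ seg (u + a) b = seg u (a + b) := by
  unfold seg
  rw [← List.map_append]
  congr 1
  have := @List.range'_append u a b 1
  simpa [Nat.add_comm] using this

lemma pal_of_palI (u l : ℕ) (h : PalI u l) : (seg u l).Palindrome := by
  apply List.Palindrome.of_reverse_eq
  apply List.ext_getElem (by simp)
  intro i h1 h2
  have hi : i < l := by
    have := h2
    rwa [seg_length] at this
  rw [List.getElem_reverse]
  have e1 : (seg u l)[i]'h2 = tm (u + i) := by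
    simp [seg]
  have e2 : (seg u l)[(seg u l).length - 1 - i]'(by rw [seg_length]; omega)
      = tm (u + (l - 1 - i)) := by
    simp [seg, seg_length]
  rw [e1, e2]
  exact (h i hi).symm

lemma palI_of_pal (u l : ℕ) (h : (seg u l).Palindrome) : PalI u l := by
  intro k hk
  have hr := h.reverse_eq
  have hk1 : k < (seg u l).length := by simpa [seg_length]
  have hk2 : k < (seg u l).reverse.length := by simpa [seg_length]
  have e1 : (seg u l).reverse[k]'hk2 = (seg u l)[(seg u l).length - 1 - k]'(by
      rw [seg_length]; omega) :=
    List.getElem_reverse hk2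
  simp only [hr] at e1
  simp only [seg, List.getElem_map, List.getElem_range', List.length_map,
    List.length_range', Nat.one_mul] at e1
  exact e1

lemma seg_split (u : ℕ) (q r : List ℕ) (h : q ++ r = seg u (q.length + r.length)) :
    q = seg u q.length ∧ r = seg (u + q.length) r.length := by
  rw [← seg_append] at h
  exact List.append_inj h (by simp [seg_length])

/- ### The boundary-rounding relation -/

def OkB (c a : ℕ) : Prop :=
  (c % 4 = 0 ∧ a = c) ∨ (c % 4 = 1 ∧ a + 1 = c) ∨
  (c % 4 = 2 ∧ (a + 2 = c ∨ a = c + 2)) ∨ (c % 4 = 3 ∧ a = c + 1)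

/-- The key local lemma: each palindrome piece of the decomposition can be
rounded to an aligned piece, emitting at most one aligned palindrome; moreover
a piece starting aligned but ending misaligned emits nothing. -/
lemma piece (u l a : ℕ) (hl : 1 ≤ l) (hp : PalI u l) (ha : OkB u a) :
    ∃ b, OkB (u + l) b ∧ a ≤ b ∧
      (b = a ∨ (PalI a (b - a) ∧ a < b)) ∧
      (u % 4 = 0 → (u + l) % 4 ≠ 0 → b = a) := by
  have hodd5 : l % 2 = 1 → l = 1 ∨ l = 3 := by
    intro h
    by_contra hc
    exact no_odd u l hp h (by omega)
  rcases ha with ⟨h0, ha⟩ | ⟨h1, ha⟩ | ⟨h2, ha⟩ | ⟨h3, ha⟩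
  · -- u % 4 = 0, a = u
    rcases Nat.mod_two_eq_zero_or_one l with he | ho
    · have hc := even_center u l hp (by omega) (by omega)
      have hl4 : l % 4 = 0 := by omega
      refine ⟨u + l, Or.inl ⟨by omega, rfl⟩, by omega, Or.inr ⟨?_, by omega⟩, ?_⟩
      · rw [ha, show u + l - u = l by omega]; exact hp
      · intro _ hne; exact absurd (by omega) hne
    · rcases hodd5 (by omega) with rfl | rfl
      · exact ⟨a, Or.inr (Or.inl ⟨by omega, by omega⟩), le_refl a,
          Or.inl rfl, fun _ _ => rfl⟩
      · exact (no3 u hp (Or.inl h0)).elim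
  · -- u % 4 = 1
    rcases Nat.mod_two_eq_zero_or_one l with he | ho
    · have hc := even_center u l hp (by omega) (by omega)
      have hl4 : l % 4 = 2 := by omega
      refine ⟨u + l + 1, Or.inr (Or.inr (Or.inr ⟨by omega, rfl⟩)), by omega,
        Or.inr ⟨?_, by omega⟩, by omega⟩
      rw [show a = u - 1 by omega, show u + l + 1 - (u - 1) = l + 2 by omega]
      exact ext13 u l h1 hl4 hp
    · rcases hodd5 (by omega) with rfl | rfl
      · exact ⟨a, Or.inr (Or.inr (Or.inl ⟨by omega, Or.inl (by omega)⟩)),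
          le_refl a, Or.inl rfl, by omega⟩
      · exact (no3 u hp (Or.inr h1)).elim
  · -- u % 4 = 2
    rcases ha with hlow | hhigh
    · -- a + 2 = u : "low" state
      rcases Nat.mod_two_eq_zero_or_one l with he | ho
      · have hc := even_center u l hp (by omega) (by omega)
        have hl4 : l % 4 = 0 := by omega
        refine ⟨u + l + 2, Or.inr (Or.inr (Or.inl ⟨by omega, Or.inr rfl⟩)), by omega,
          Or.inr ⟨?_, by omega⟩, by omega⟩
        rw [show a = u - 2 by omega, show u + l + 2 - (u - 2) = l + 4 by omega]
        exact ext22 u l h2 hl4 hl hp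
      · have hblock : PalI a 4 := by
          obtain ⟨n, hn⟩ : ∃ n, a = 4 * n := ⟨a / 4, by omega⟩
          rw [hn]; exact palI_block n
        rcases hodd5 (by omega) with rfl | rfl
        · refine ⟨u + 2, Or.inr (Or.inr (Or.inr ⟨by omega, by omega⟩)), by omega,
            Or.inr ⟨?_, by omega⟩, by omega⟩
          rw [show u + 2 - a = 4 by omega]; exact hblock
        · refine ⟨u + 2, Or.inr (Or.inl ⟨by omega, by omega⟩), by omega,
            Or.inr ⟨?_, by omega⟩, by omega⟩
          rw [show u + 2 - a = 4 by omega]; exact hblock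
    · -- a = u + 2 : "high" state
      rcases Nat.mod_two_eq_zero_or_one l with he | ho
      · have hc := even_center u l hp (by omega) (by omega)
        have hl4 : l % 4 = 0 := by omega
        rcases (show l = 4 ∨ 8 ≤ l by omega) with rfl | h8
        · exact ⟨a, Or.inr (Or.inr (Or.inl ⟨by omega, Or.inl (by omega)⟩)),
            le_refl a, Or.inl rfl, by omega⟩
        · refine ⟨u + l - 2, Or.inr (Or.inr (Or.inl ⟨by omega, Or.inl (by omega)⟩)),
            by omega, Or.inr ⟨?_, by omega⟩, by omega⟩
          rw [hhigh, show u + l - 2 - (u + 2) = l - 2 * 2 by omega]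
          exact palI_trim u l 2 hp (by omega)
      · rcases hodd5 (by omega) with rfl | rfl
        · exact ⟨a, Or.inr (Or.inr (Or.inr ⟨by omega, by omega⟩)),
            le_refl a, Or.inl rfl, by omega⟩
        · exact ⟨a, Or.inr (Or.inl ⟨by omega, by omega⟩),
            le_refl a, Or.inl rfl, by omega⟩
  · -- u % 4 = 3, a = u + 1
    rcases Nat.mod_two_eq_zero_or_one l with he | ho
    · have hc := even_center u l hp (by omega) (by omega)
      have hl4 : l % 4 = 2 := by omega
      rcases (show l = 2 ∨ 6 ≤ l by omega) with rfl | h6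
      · exact ⟨a, Or.inr (Or.inl ⟨by omega, by omega⟩),
          le_refl a, Or.inl rfl, by omega⟩
      · refine ⟨u + l - 1, Or.inr (Or.inl ⟨by omega, by omega⟩), by omega,
          Or.inr ⟨?_, by omega⟩, by omega⟩
        rw [ha, show u + l - 1 - (u + 1) = l - 2 * 1 by omega]
        exact palI_trim u l 1 hp (by omega)
    · rcases hodd5 (by omega) with rfl | rfl
      · exact ⟨a, Or.inl ⟨by omega, by omega⟩, le_refl a, Or.inl rfl, by omega⟩
      · exact ⟨a, Or.inr (Or.inr (Or.inl ⟨by omega, Or.inl (by omega)⟩)),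
          le_refl a, Or.inl rfl, by omega⟩

/-- Counts (0 or 1) whether the decomposition has a piece starting at an
aligned boundary and ending at a misaligned one. -/
def zcnt : List (List ℕ) → ℕ → ℕ
  | [], _ => 0
  | q :: t, u => if u % 4 = 0 ∧ (u + q.length) % 4 ≠ 0 then 1 else zcnt t (u + q.length)

lemma zcnt_pos : ∀ (qs : List (List ℕ)) (u : ℕ), u % 4 = 0 →
    (∃ q ∈ qs, q.length % 4 ≠ 0) → 1 ≤ zcnt qs u := by
  intro qs
  induction qs with
  | nil => intro u _ h; simp at h
  | cons q t ih =>
    rintro u hu ⟨p, hp, hne⟩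
    by_cases h : (u + q.length) % 4 ≠ 0
    · simp [zcnt, hu, h]
    · push_neg at h
      have hz : zcnt (q :: t) u = zcnt t (u + q.length) := by
        simp [zcnt, h]
      rw [hz]
      apply ih _ h
      rcases List.mem_cons.mp hp with rfl | hp2
      · exact absurd (by omega) hne
      · exact ⟨p, hp2, hne⟩

/-- The global transformation: any palindromic decomposition of a factor can be
rounded to an aligned decomposition without increasing the number of pieces,
and strictly decreasing it if some piece starts aligned and ends misaligned. -/
lemma mainLemma : ∀ (qs : List (List ℕ)) (u a : ℕ),
    (∀ q ∈ qs, q ≠ [] ∧ q.Palindrome) →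
    qs.flatten = seg u qs.flatten.length →
    OkB u a →
    ∃ (b : ℕ) (rs : List (List ℕ)), OkB (u + qs.flatten.length) b ∧ a ≤ b ∧
      (∀ r ∈ rs, r ≠ [] ∧ r.Palindrome) ∧
      rs.flatten = seg a (b - a) ∧
      rs.length + zcnt qs u ≤ qs.length := by
  intro qs
  induction qs with
  | nil =>
    intro u a _ _ ha
    refine ⟨a, [], ?_, le_refl a, ?_, ?_, ?_⟩
    · simpa using ha
    · intro r hr; simp at hr
    · simp [seg, Nat.sub_self]
    · simp [zcnt]
  | cons q t ih =>
    intro u a hq hfl ha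
    have hq1 := hq q (by simp)
    have hfl' : q ++ t.flatten = seg u (q.length + t.flatten.length) := by
      have h1 : (q :: t).flatten = q ++ t.flatten := by simp
      have h2 : (q :: t).flatten.length = q.length + t.flatten.length := by simp
      rw [← h1, ← h2]; exact hfl
    obtain ⟨hqseg, htseg⟩ := seg_split u q t.flatten hfl'
    have hpal : PalI u q.length := palI_of_pal u q.length (hqseg ▸ hq1.2)
    have hl : 1 ≤ q.length := List.length_pos_iff.mpr hq1.1
    obtain ⟨b₁, hOk1, hab1, hemit, hstrict⟩ := piece u q.length a hl hpal ha
    obtain ⟨b, rs', hOkb, hb1b, hrspal, hrsflat, hcount⟩ :=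
      ih (u + q.length) b₁ (fun r hr => hq r (by simp [hr])) htseg hOk1
    have hLen : (q :: t).flatten.length = q.length + t.flatten.length := by simp
    have hOkb' : OkB (u + (q :: t).flatten.length) b := by
      rw [hLen, ← Nat.add_assoc]; exact hOkb
    rcases hemit with hba | ⟨hpalb, hlt⟩
    · -- piece emits nothing
      subst hba
      refine ⟨b, rs', hOkb', hb1b, hrspal, hrsflat, ?_⟩
      by_cases hC : u % 4 = 0 ∧ (u + q.length) % 4 ≠ 0
      · have hz : zcnt (q :: t) u = 1 := by
          simp [zcnt, hC.1, hC.2]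
        rw [hz]
        have : 0 ≤ zcnt t (u + q.length) := Nat.zero_le _
        simp only [List.length_cons]
        omega
      · have hz : zcnt (q :: t) u = zcnt t (u + q.length) := by
          simp only [zcnt, if_neg hC]
        rw [hz]
        simp only [List.length_cons]
        omega
    · -- piece emits one aligned palindrome
      have hC : ¬(u % 4 = 0 ∧ (u + q.length) % 4 ≠ 0) := by
        intro hC
        have := hstrict hC.1 hC.2
        omega
      refine ⟨b, seg a (b₁ - a) :: rs', hOkb', by omega, ?_, ?_, ?_⟩
      · intro r hr
        rcases List.mem_cons.mp hr with rfl | hr2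
        · constructor
          · intro hnil
            have := congrArg List.length hnil
            rw [seg_length] at this
            simp at this
            omega
          · exact pal_of_palI a (b₁ - a) hpalb
        · exact hrspal r hr2
      · have happ := seg_append a (b₁ - a) (b - b₁)
        rw [show a + (b₁ - a) = b₁ by omega,
            show b₁ - a + (b - b₁) = b - a by omega] at happ
        simp only [List.flatten_cons, hrsflat, happ]
      · have hz : zcnt (q :: t) u = zcnt t (u + q.length) := by
          simp only [zcnt, if_neg hC]
        rw [hz]
        simp only [List.length_cons]
        omega

end TMZeroDecomp
/-- For every `N ≥ 1`, every optimal palindromic decomposition of the prefix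
of the Thue–Morse word of length `4N` is a 0-decomposition: every palindrome in
it has length divisible by 4. -/
theorem pplTM_4N_optimal_is_zero_decomposition (N : ℕ) (hN : 1 ≤ N)
    (ps : List (List ℕ))
    (hdec : IsPalDecomp ((List.range (4 * N)).map tm) ps)
    (hopt : ps.length = pplTM (4 * N)) :
    ∀ p ∈ ps, p.length % 4 = 0 := by
  by_contra hcon
  push_neg at hcon
  obtain ⟨p, hpmem, hpne⟩ := hcon
  obtain ⟨hflat, hpal⟩ := hdec
  have hL : ps.flatten.length = 4 * N := by rw [hflat]; simp
  have hfl' : ps.flatten = TMZeroDecomp.seg 0 ps.flatten.length := by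
    rw [hL, hflat]
    simp [TMZeroDecomp.seg, List.range_eq_range']
  obtain ⟨b, rs, hOkb, _, hrspal, hrsflat, hcount⟩ :=
    TMZeroDecomp.mainLemma ps 0 0 hpal hfl' (Or.inl ⟨by norm_num, rfl⟩)
  have hb : b = 4 * N := by
    rw [Nat.zero_add, hL] at hOkb
    rcases hOkb with ⟨h, h2⟩ | ⟨h, _⟩ | ⟨h, _⟩ | ⟨h, _⟩ <;> omega
  have hrs_dec : IsPalDecomp ((List.range (4 * N)).map tm) rs := by
    constructor
    · rw [hrsflat, hb]
      simp [TMZeroDecomp.seg, List.range_eq_range']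
    · exact hrspal
  have hZ : 1 ≤ TMZeroDecomp.zcnt ps 0 :=
    TMZeroDecomp.zcnt_pos ps 0 (by norm_num) ⟨p, hpmem, hpne⟩
  have hlt : rs.length < ps.length := by omega
  have hmem : rs.length ∈
      {k | ∃ qs : List (List ℕ), qs.length = k ∧
        IsPalDecomp ((List.range (4 * N)).map tm) qs} := ⟨rs, rfl, hrs_dec⟩
  have hinf := Nat.sInf_le hmem
  rw [hopt] at hlt
  unfold pplTM palLen at hlt
  omega
end

section
/- The sequence of first differences d(n) = PPL_t(n+1) − PPL_t(n) (with PPL_t(0) = 0), which takes values in {−1, 0, 1}, is the fixed point of a 4-uniform morphism: for every n ≥ 0, d(4n) = 1, d(4n+1) = min(d(n), 0) + 1, d(4n+2) = max(d(n), 0) − 1, and d(4n+3) = −1. -/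
lemma tm_le_one (n : ℕ) : tm n ≤ 1 := Nat.lt_succ_iff.mp (Nat.mod_lt _ (by norm_num))

lemma tm_two_mul (k : ℕ) : tm (2 * k) = tm k := by
  rcases Nat.eq_zero_or_pos k with rfl | hk
  · rfl
  · unfold tm
    rw [Nat.digits_def' (by norm_num : 1 < 2) (by omega)]
    simp [Nat.mul_div_cancel_left _ (by norm_num : 0 < 2), Nat.mul_mod_right]

lemma tm_two_mul_add_one (k : ℕ) : tm (2 * k + 1) + tm k = 1 := by
  unfold tm
  rw [Nat.digits_def' (by norm_num : 1 < 2) (by omega)]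
  have h1 : (2 * k + 1) % 2 = 1 := by omega
  have h2 : (2 * k + 1) / 2 = k := by omega
  rw [h1, h2]
  simp only [List.sum_cons]
  omega

-- block lemmas
lemma tm4_0 (a : ℕ) : tm (4 * a) = tm a := by
  have h : 4 * a = 2 * (2 * a) := by ring
  rw [h, tm_two_mul, tm_two_mul]

lemma tm4_1 (a : ℕ) : tm (4 * a + 1) + tm a = 1 := by
  have h : 4 * a + 1 = 2 * (2 * a) + 1 := by ring
  rw [h, ← tm_two_mul a]; exact tm_two_mul_add_one (2 * a)

lemma tm4_2 (a : ℕ) : tm (4 * a + 2) + tm a = 1 := by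
  have h : 4 * a + 2 = 2 * (2 * a + 1) := by ring
  rw [h, tm_two_mul]
  have := tm_two_mul_add_one a
  have := tm_le_one a
  have h2 : tm (2 * a + 1) = 1 - tm a := by omega
  omega

lemma tm4_3 (a : ℕ) : tm (4 * a + 3) = tm a := by
  have h : 4 * a + 3 = 2 * (2 * a + 1) + 1 := by ring
  have h1 := tm_two_mul_add_one (2 * a + 1)
  have h2 := tm_two_mul_add_one a
  have := tm_le_one a
  have := tm_le_one (2 * a + 1)
  rw [h]; omega

lemma tm_pair (a : ℕ) : tm (2 * a) + tm (2 * a + 1) = 1 := by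
  have := tm_two_mul_add_one a
  rw [tm_two_mul] at *
  omega

-- no three consecutive equal
lemma tm_no3 (e : ℕ) (h1 : tm e = tm (e + 1)) (h2 : tm (e + 1) = tm (e + 2)) : False := by
  rcases Nat.even_or_odd e with ⟨k, hk⟩ | ⟨k, hk⟩
  · have hp := tm_pair k
    rw [show e = 2 * k by omega] at h1
    omega
  · have hp := tm_pair (k + 1)
    rw [show e = 2 * k + 1 by omega, show 2 * k + 1 + 1 + 1 = 2 * (k + 1) + 1 by ring,
        show 2 * k + 1 + 1 = 2 * (k + 1) by ring] at h2
    omega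

def Q (n : ℕ) : ℕ :=
  if _h : n = 0 then 0
  else if n % 4 = 0 then Q (n / 4)
  else if n % 4 = 1 then Q (n / 4) + 1
  else if n % 4 = 2 then min (Q (n / 4)) (Q (n / 4 + 1)) + 2
  else Q (n / 4 + 1) + 1
termination_by n
decreasing_by all_goals omega

lemma Q_zero : Q 0 = 0 := by rw [Q]; simp

lemma Q0 (m : ℕ) : Q (4 * m) = Q m := by
  rcases Nat.eq_zero_or_pos m with rfl | hm
  · simp [Q_zero]
  · rw [Q]
    have h1 : 4 * m ≠ 0 := by omega
    have h2 : 4 * m % 4 = 0 := by omega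
    have h3 : 4 * m / 4 = m := by omega
    simp [h1, h2, h3]

lemma Q1 (m : ℕ) : Q (4 * m + 1) = Q m + 1 := by
  rw [Q]
  have h1 : (4 * m + 1) % 4 = 1 := by omega
  have h3 : (4 * m + 1) / 4 = m := by omega
  simp [h1, h3]

lemma Q2 (m : ℕ) : Q (4 * m + 2) = min (Q m) (Q (m + 1)) + 2 := by
  rw [Q]
  have h1 : (4 * m + 2) % 4 = 2 := by omega
  have h3 : (4 * m + 2) / 4 = m := by omega
  simp [h1, h3]

lemma Q3 (m : ℕ) : Q (4 * m + 3) = Q (m + 1) + 1 := by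
  rw [Q]
  have h1 : (4 * m + 3) % 4 = 3 := by omega
  have h3 : (4 * m + 3) / 4 = m := by omega
  simp [h1, h3]

lemma Q_lip : ∀ n : ℕ, Q (n + 1) ≤ Q n + 1 ∧ Q n ≤ Q (n + 1) + 1 := by
  intro n
  induction n using Nat.strong_induction_on with
  | _ n IH =>
    rcases Nat.eq_zero_or_pos n with rfl | hn
    · rw [Q_zero, show (0:ℕ)+1 = 4*0+1 from rfl, Q1, Q_zero]; omega
    · have h4 := Nat.div_add_mod n 4
      set m := n / 4 with hm
      have hlt : n % 4 < 4 := Nat.mod_lt _ (by norm_num)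
      interval_cases h : n % 4
      · have hn' : n = 4 * m := by omega
        have hs : n + 1 = 4 * m + 1 := by omega
        rw [hn', show 4*m+1 = 4*m+1 from rfl, Q1, Q0]; omega
      · have hn' : n = 4 * m + 1 := by omega
        have hs : n + 1 = 4 * m + 2 := by omega
        have hIH := IH m (by omega)
        rw [hn', show 4*m+1+1 = 4*m+2 by omega, Q1, Q2]; omega
      · have hn' : n = 4 * m + 2 := by omega
        have hs : n + 1 = 4 * m + 3 := by omega
        have hIH := IH m (by omega)
        rw [hn', show 4*m+2+1 = 4*m+3 by omega, Q2, Q3]; omega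
      · have hn' : n = 4 * m + 3 := by omega
        have hs : n + 1 = 4 * (m + 1) := by omega
        rw [hn', show 4*m+3+1 = 4*(m+1) by omega, Q0, Q3]; omega

section center
variable {j n : ℕ}

lemma center_even (h2 : j + 2 ≤ n) (hpar : (n - j) % 2 = 0)
    (H : ∀ a b, a + b + 1 = n - j → tm (j + a) = tm (j + b)) : (j + n) % 4 = 0 := by
  obtain ⟨h, hh⟩ : ∃ h, n - j = 2 * h := ⟨(n - j) / 2, by omega⟩
  have hh1 : 1 ≤ h := by omega
  have hA := H (h - 1) h (by omega)
  rcases Nat.even_or_odd (j + h) with ⟨e, he⟩ | ⟨e, he⟩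
  · omega
  · exfalso
    have hp := tm_pair e
    rw [show j + (h - 1) = 2 * e by omega, show j + h = 2 * e + 1 by omega] at hA
    omega

lemma no_odd_pal (h5 : j + 5 ≤ n) (hpar : (n - j) % 2 = 1)
    (H : ∀ a b, a + b + 1 = n - j → tm (j + a) = tm (j + b)) : False := by
  obtain ⟨h, hh⟩ : ∃ h, n - j = 2 * h + 1 := ⟨(n - j) / 2, by omega⟩
  have hh2 : 2 ≤ h := by omega
  have hA := H (h - 1) (h + 1) (by omega)
  have hB := H (h - 2) (h + 2) (by omega)
  rcases Nat.even_or_odd (j + h) with ⟨e, he⟩ | ⟨e, he⟩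
  · -- center even : j + h = 2e, e ≥ 1
    obtain ⟨f, rfl⟩ : ∃ f, e = f + 1 := ⟨e - 1, by omega⟩
    -- hA : tm (2(f+1) - 1) = tm (2(f+1)+1), hB : tm (2f) = tm (2f+4)
    rw [show j + (h - 1) = 2 * f + 1 by omega, show j + (h + 1) = 2 * (f + 1) + 1 by omega] at hA
    rw [show j + (h - 2) = 2 * f by omega, show j + (h + 2) = 2 * (f + 2) by omega] at hB
    have p1 := tm_two_mul_add_one f
    have p2 := tm_two_mul_add_one (f + 1)
    have e1 := tm_two_mul f
    have e2 := tm_two_mul (f + 2)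
    -- tm f = tm (f+1), tm f = tm (f+2)
    have c1 : tm f = tm (f + 1) := by omega
    have c2 : tm f = tm (f + 2) := by omega
    exact tm_no3 f c1 (by omega)
  · -- center odd : j + h = 2e + 1, e ≥ 1
    obtain ⟨f, rfl⟩ : ∃ f, e = f + 1 := ⟨e - 1, by omega⟩
    rw [show j + (h - 1) = 2 * (f + 1) by omega, show j + (h + 1) = 2 * (f + 2) by omega] at hA
    rw [show j + (h - 2) = 2 * f + 1 by omega, show j + (h + 2) = 2 * (f + 2) + 1 by omega] at hB
    have p1 := tm_two_mul_add_one f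
    have p2 := tm_two_mul_add_one (f + 2)
    have e1 := tm_two_mul (f + 1)
    have e2 := tm_two_mul (f + 2)
    have c1 : tm (f + 1) = tm (f + 2) := by omega
    have c2 : tm f = tm (f + 2) := by omega
    exact tm_no3 f (by omega) c1

end center

lemma min_le_min_succ {a b c d : ℕ} (h1 : a ≤ c + 1) (h2 : b ≤ d + 1) :
    min a b ≤ min c d + 1 := by
  rcases le_total c d with h | h
  · rw [min_eq_left h]; exact le_trans (min_le_left _ _) h1
  · rw [min_eq_right h]; exact le_trans (min_le_right _ _) h2

/-- Key lemma: if the suffix `t[j..n)` of the Thue–Morse word is a palindrome,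
then `Q n ≤ Q j + 1`. -/
lemma key2 : ∀ n j : ℕ, j < n → (∀ a b, a + b + 1 = n - j → tm (j + a) = tm (j + b)) →
    Q n ≤ Q j + 1 := by
  intro n
  induction n using Nat.strong_induction_on with
  | _ n IH =>
    intro j hj H
    by_cases h1 : n = j + 1
    · subst h1; exact (Q_lip j).1
    by_cases h2 : n = j + 2
    · subst h2
      have hA : tm j = tm (j + 1) := by
        have := H 0 1 (by omega); simpa using this
      -- j must be odd
      rcases Nat.even_or_odd j with ⟨e, he⟩ | ⟨e, he⟩
      · exfalso; have := tm_pair e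
        rw [show j = 2 * e by omega] at hA; omega
      have hm4 : j % 4 = 1 ∨ j % 4 = 3 := by omega
      rcases hm4 with hm | hm
      · obtain ⟨a, rfl⟩ : ∃ a, j = 4 * a + 1 := ⟨j / 4, by omega⟩
        rw [show 4 * a + 1 + 2 = 4 * a + 3 by omega, Q3, Q1]
        have := Q_lip a; omega
      · obtain ⟨a, rfl⟩ : ∃ a, j = 4 * a + 3 := ⟨j / 4, by omega⟩
        rw [show 4 * a + 3 + 2 = 4 * (a + 1) + 1 by omega, Q1, Q3]; omega
    by_cases h3 : n = j + 3
    · subst h3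
      have hA : tm j = tm (j + 2) := by
        have := H 0 2 (by omega); simpa using this
      have hm4 : j % 4 < 4 := by omega
      obtain ⟨a, s, hs, hjs⟩ : ∃ a s, s < 4 ∧ j = 4 * a + s := ⟨j / 4, j % 4, by omega, by omega⟩
      interval_cases s
      · exfalso
        rw [show 4 * a + 0 = 4 * a by omega] at hjs; subst hjs
        have := tm4_0 a; have := tm4_2 a; have := tm_le_one a
        rw [show 4 * a + 2 = 4 * a + 2 from rfl] at hA; omega
      · exfalso; subst hjs
        have := tm4_1 a; have := tm4_3 a; have := tm_le_one a
        rw [show 4 * a + 1 + 2 = 4 * a + 3 by omega] at hA; omega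
      · subst hjs
        rw [show 4 * a + 2 + 3 = 4 * (a + 1) + 1 by omega, Q1, Q2]
        have := Q_lip a
        rcases le_total (Q a) (Q (a + 1)) with h | h
        · rw [min_eq_left h]; omega
        · rw [min_eq_right h]; omega
      · subst hjs
        rw [show 4 * a + 3 + 3 = 4 * (a + 1) + 2 by omega, Q2, Q3]
        have := min_le_left (Q (a + 1)) (Q (a + 2)); omega
    by_cases h4 : n = j + 4
    · subst h4
      have hA : tm (j + 1) = tm (j + 2) := H 1 2 (by omega)
      -- j must be even
      rcases Nat.even_or_odd j with ⟨e, he⟩ | ⟨e, he⟩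
      swap
      · exfalso; have := tm_pair (e + 1)
        rw [show j + 1 = 2 * (e + 1) by omega, show j + 2 = 2 * (e + 1) + 1 by omega] at hA
        omega
      have hm4 : j % 4 = 0 ∨ j % 4 = 2 := by omega
      rcases hm4 with hm | hm
      · obtain ⟨a, rfl⟩ : ∃ a, j = 4 * a := ⟨j / 4, by omega⟩
        rw [show 4 * a + 4 = 4 * (a + 1) by omega, Q0, Q0]
        have := Q_lip a; omega
      · obtain ⟨a, rfl⟩ : ∃ a, j = 4 * a + 2 := ⟨j / 4, by omega⟩
        rw [show 4 * a + 2 + 4 = 4 * (a + 1) + 2 by omega, Q2, Q2]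
        have l1 := Q_lip a; have l2 := Q_lip (a + 1)
        exact Nat.add_le_add_right (min_le_min_succ (by omega) (by omega)) 2
    -- main case : palindrome of length ≥ 5
    have h5 : j + 5 ≤ n := by omega
    have hev : (n - j) % 2 = 0 := by
      rcases Nat.mod_two_eq_zero_or_one (n - j) with h | h
      · exact h
      · exact absurd (no_odd_pal h5 h H) (fun f => f)
    have h40 : (j + n) % 4 = 0 := center_even (by omega) hev H
    have hm4 : n % 4 < 4 := by omega
    obtain ⟨m, s, hs, rfl⟩ : ∃ m s, s < 4 ∧ n = 4 * m + s := ⟨n / 4, n % 4, by omega, by omega⟩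
    interval_cases s
    · -- n = 4m, j = 4r
      obtain ⟨r, rfl⟩ : ∃ r, j = 4 * r := ⟨j / 4, by omega⟩
      have Hq : ∀ a b, a + b + 1 = m - r → tm (r + a) = tm (r + b) := by
        intro a b hab
        have e1 : tm (r + a) = tm (4 * r + 4 * a) := by
          rw [show 4 * r + 4 * a = 4 * (r + a) by ring, tm4_0]
        have e2 : tm (r + b) = tm (4 * r + (4 * b + 3)) := by
          rw [show 4 * r + (4 * b + 3) = 4 * (r + b) + 3 by ring, tm4_3]
        rw [e1, e2]
        exact H (4 * a) (4 * b + 3) (by omega)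
      have hmain := IH m (by omega) r (by omega) Hq
      rw [show 4 * m + 0 = 4 * m by omega, Q0, Q0]
      exact hmain
    · -- n = 4m+1, j = 4r+3
      obtain ⟨r, rfl⟩ : ∃ r, j = 4 * r + 3 := ⟨j / 4, by omega⟩
      have hmr : r + 2 ≤ m := by omega
      have Hq : ∀ a b, a + b + 1 = m - (r + 1) → tm ((r + 1) + a) = tm ((r + 1) + b) := by
        intro a b hab
        have e1 : tm ((r + 1) + a) = tm (4 * r + 3 + (4 * a + 1)) := by
          rw [show 4 * r + 3 + (4 * a + 1) = 4 * ((r + 1) + a) by ring, tm4_0]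
        have e2 : tm ((r + 1) + b) = tm (4 * r + 3 + (4 * b + 4)) := by
          rw [show 4 * r + 3 + (4 * b + 4) = 4 * ((r + 1) + b) + 3 by ring, tm4_3]
        rw [e1, e2]
        exact H (4 * a + 1) (4 * b + 4) (by omega)
      have hmain := IH m (by omega) (r + 1) (by omega) Hq
      rw [Q1, Q3]
      omega
    · -- n = 4m+2, j = 4r+2
      obtain ⟨r, rfl⟩ : ∃ r, j = 4 * r + 2 := ⟨j / 4, by omega⟩
      have hmr : r + 2 ≤ m := by omega
      have HqA : ∀ a b, a + b + 1 = m - (r + 1) → tm ((r + 1) + a) = tm ((r + 1) + b) := by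
        intro a b hab
        have e1 : tm ((r + 1) + a) = tm (4 * r + 2 + (4 * a + 2)) := by
          rw [show 4 * r + 2 + (4 * a + 2) = 4 * ((r + 1) + a) by ring, tm4_0]
        have e2 : tm ((r + 1) + b) = tm (4 * r + 2 + (4 * b + 5)) := by
          rw [show 4 * r + 2 + (4 * b + 5) = 4 * ((r + 1) + b) + 3 by ring, tm4_3]
        rw [e1, e2]
        exact H (4 * a + 2) (4 * b + 5) (by omega)
      have aux : ∀ a b, a + (b + 1) = m - r → tm (r + a) = tm (r + (b + 1)) := by
        intro a b hab
        have e1 : tm (r + a) = tm (4 * r + 2 + (4 * a + 1)) := by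
          rw [show 4 * r + 2 + (4 * a + 1) = 4 * (r + a) + 3 by ring, tm4_3]
        have e2 : tm (r + (b + 1)) = tm (4 * r + 2 + (4 * b + 2)) := by
          rw [show 4 * r + 2 + (4 * b + 2) = 4 * (r + (b + 1)) by ring, tm4_0]
        rw [e1, e2]
        exact H (4 * a + 1) (4 * b + 2) (by omega)
      have HqB : ∀ a b, a + b + 1 = (m + 1) - r → tm (r + a) = tm (r + b) := by
        intro a b hab
        rcases b with _ | b
        · rcases a with _ | a
          · omega
          · exact (aux 0 a (by omega)).symm
        · exact aux a b (by omega)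
      have hA := IH m (by omega) (r + 1) (by omega) HqA
      have hB := IH (m + 1) (by omega) r (by omega) HqB
      rw [Q2, Q2]
      have h1 := min_le_left (Q m) (Q (m + 1))
      have h2 := min_le_right (Q m) (Q (m + 1))
      rcases le_total (Q r) (Q (r + 1)) with h | h
      · rw [min_eq_left h]; omega
      · rw [min_eq_right h]; omega
    · -- n = 4m+3, j = 4r+1
      obtain ⟨r, rfl⟩ : ∃ r, j = 4 * r + 1 := ⟨j / 4, by omega⟩
      have hmr : r + 1 ≤ m := by omega
      have aux : ∀ a b, a + (b + 1) + r = m → tm (r + a) = tm (r + (b + 1)) := by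
        intro a b hab
        have e1 : tm (r + a) = tm (4 * r + 1 + (4 * a + 2)) := by
          rw [show 4 * r + 1 + (4 * a + 2) = 4 * (r + a) + 3 by ring, tm4_3]
        have e2 : tm (r + (b + 1)) = tm (4 * r + 1 + (4 * b + 3)) := by
          rw [show 4 * r + 1 + (4 * b + 3) = 4 * (r + (b + 1)) by ring, tm4_0]
        rw [e1, e2]
        exact H (4 * a + 2) (4 * b + 3) (by omega)
      have HqB : ∀ a b, a + b + 1 = (m + 1) - r → tm (r + a) = tm (r + b) := by
        intro a b hab
        rcases b with _ | b
        · rcases a with _ | a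
          · omega
          · exact (aux 0 a (by omega)).symm
        · exact aux a b (by omega)
      have hB := IH (m + 1) (by omega) r (by omega) HqB
      rw [Q3, Q1]
      omega

lemma flatten_map_singleton (w : List ℕ) : (w.map (fun a => [a])).flatten = w := by
  induction w with
  | nil => rfl
  | cons a t ih => simp [ih]

lemma decomp_singletons (w : List ℕ) : IsPalDecomp w (w.map (fun a => [a])) := by
  refine ⟨flatten_map_singleton w, ?_⟩
  intro p hp
  simp only [List.mem_map] at hp
  obtain ⟨a, -, rfl⟩ := hp
  exact ⟨by simp, List.Palindrome.singleton a⟩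

lemma palLen_spec (w : List ℕ) : ∃ ps, ps.length = palLen w ∧ IsPalDecomp w ps := by
  have hne : {k | ∃ ps, ps.length = k ∧ IsPalDecomp w ps}.Nonempty :=
    ⟨(w.map (fun a => [a])).length, _, rfl, decomp_singletons w⟩
  exact Nat.sInf_mem hne

lemma palLen_le {w : List ℕ} {ps : List (List ℕ)} (h : IsPalDecomp w ps) :
    palLen w ≤ ps.length := Nat.sInf_le ⟨ps, rfl, h⟩

lemma palLen_nil : palLen ([] : List ℕ) = 0 :=
  Nat.le_zero.mp (palLen_le (ps := []) ⟨rfl, by simp⟩)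

lemma palLen_append_pal {w p : List ℕ} (hp : p.Palindrome) (hne : p ≠ []) :
    palLen (w ++ p) ≤ palLen w + 1 := by
  obtain ⟨ps, hlen, hflat, hall⟩ := palLen_spec w
  have : IsPalDecomp (w ++ p) (ps ++ [p]) := by
    constructor
    · simp [hflat]
    · intro q hq
      rcases List.mem_append.mp hq with h | h
      · exact hall q h
      · simp only [List.mem_singleton] at h; subst h; exact ⟨hne, hp⟩
  calc palLen (w ++ p) ≤ (ps ++ [p]).length := palLen_le this
    _ = palLen w + 1 := by simp [hlen]

def phi (w : List ℕ) : List ℕ := w.flatMap (fun a => [a, 1 - a, 1 - a, a])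

lemma phi_nil : phi [] = [] := rfl

lemma phi_cons (a : ℕ) (t : List ℕ) : phi (a :: t) = [a, 1 - a, 1 - a, a] ++ phi t := rfl

lemma phi_append (u v : List ℕ) : phi (u ++ v) = phi u ++ phi v := by
  simp [phi]

lemma phi_reverse (w : List ℕ) : (phi w).reverse = phi w.reverse := by
  induction w with
  | nil => rfl
  | cons a t ih =>
    rw [phi_cons, List.reverse_append, ih,
      show (a :: t).reverse = t.reverse ++ [a] from List.reverse_cons .., phi_append]
    simp [phi]

lemma phi_palindrome {p : List ℕ} (hp : p.Palindrome) : (phi p).Palindrome := by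
  apply List.Palindrome.of_reverse_eq
  rw [phi_reverse, hp.reverse_eq]

lemma phi_ne_nil {p : List ℕ} (h : p ≠ []) : phi p ≠ [] := by
  cases p with
  | nil => exact absurd rfl h
  | cons a t => simp [phi_cons]

lemma palLen_phi_le (w : List ℕ) : palLen (phi w) ≤ palLen w := by
  obtain ⟨ps, hlen, hflat, hall⟩ := palLen_spec w
  have hfl : ∀ qs : List (List ℕ), (qs.map phi).flatten = phi qs.flatten := by
    intro qs
    induction qs with
    | nil => rfl
    | cons q t ih => simp [phi_append, ih]
  have : IsPalDecomp (phi w) (ps.map phi) := by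
    constructor
    · rw [hfl, hflat]
    · intro q hq
      simp only [List.mem_map] at hq
      obtain ⟨p, hp, rfl⟩ := hq
      exact ⟨phi_ne_nil (hall p hp).1, phi_palindrome (hall p hp).2⟩
  calc palLen (phi w) ≤ (ps.map phi).length := palLen_le this
    _ = palLen w := by simp [hlen]

lemma palLen_dropLast_le (w : List ℕ) : palLen w.dropLast ≤ palLen w + 1 := by
  rcases List.eq_nil_or_concat' w with rfl | ⟨w', c, rfl⟩
  · simp [palLen_nil]
  obtain ⟨ps, hlen, hflat, hall⟩ := palLen_spec (w' ++ [c])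
  rcases List.eq_nil_or_concat ps with rfl | ⟨ps', p, rfl⟩
  · exfalso; simp at hflat
  rw [List.concat_eq_append] at hflat hlen hall
  have hp := hall p (by simp)
  have hps' : ∀ q ∈ ps', q ≠ [] ∧ q.Palindrome := fun q hq => hall q (by simp [hq])
  have hpne : p ≠ [] := hp.1
  have hdrop : (w' ++ [c]).dropLast = ps'.flatten ++ p.dropLast := by
    rw [← hflat, List.flatten_append]
    simp only [List.flatten, List.append_eq, List.append_nil]
    rw [List.dropLast_append_of_ne_nil hpne]
  have hlen' : ps'.length + 1 = palLen (w' ++ [c]) := by simpa using hlen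
  have hple : palLen ps'.flatten ≤ ps'.length := by
    have : IsPalDecomp ps'.flatten ps' := ⟨rfl, hps'⟩
    exact palLen_le this
  rw [hdrop]
  cases hp.2 with
  | nil => exact absurd rfl hpne
  | singleton x =>
    simp only [List.dropLast_singleton, List.append_nil]
    omega
  | @cons_concat x q hq =>
    have : (x :: (q ++ [x])).dropLast = [x] ++ q := by
      rw [show x :: (q ++ [x]) = (x :: q) ++ [x] by simp, List.dropLast_concat]; rfl
    rw [this]
    rcases List.eq_nil_or_concat q with rfl | hqne
    · have h1 : palLen (ps'.flatten ++ ([x] ++ [])) ≤ palLen ps'.flatten + 1 :=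
        palLen_append_pal (List.Palindrome.singleton x) (by simp)
      omega
    · have hqn : q ≠ [] := by rcases hqne with ⟨l, b, rfl⟩; simp
      have h1 : palLen (ps'.flatten ++ [x] ++ q) ≤ palLen (ps'.flatten ++ [x]) + 1 :=
        palLen_append_pal hq hqn
      have h2 : palLen (ps'.flatten ++ [x]) ≤ palLen ps'.flatten + 1 :=
        palLen_append_pal (List.Palindrome.singleton x) (by simp)
      rw [← List.append_assoc]
      omega

lemma exists_last_pal {w : List ℕ} (hne : w ≠ []) :
    ∃ u p : List ℕ, u ++ p = w ∧ p ≠ [] ∧ p.Palindrome ∧ palLen u + 1 ≤ palLen w := by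
  obtain ⟨ps, hlen, hflat, hall⟩ := palLen_spec w
  rcases List.eq_nil_or_concat ps with rfl | ⟨ps', p, rfl⟩
  · exfalso; rw [← hflat] at hne; simp at hne
  rw [List.concat_eq_append] at hflat hlen hall
  have hp := hall p (by simp)
  refine ⟨ps'.flatten, p, ?_, hp.1, hp.2, ?_⟩
  · rw [← hflat, List.flatten_append]; simp
  · have hple : palLen ps'.flatten ≤ ps'.length :=
      palLen_le ⟨rfl, fun q hq => hall q (by simp [hq])⟩
    simp only [List.length_append, List.length_singleton] at hlen
    omega

def pref (n : ℕ) : List ℕ := (List.range n).map tm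

lemma pplTM_def (n : ℕ) : pplTM n = palLen (pref n) := rfl

lemma pref_zero : pref 0 = [] := rfl

lemma pref_succ (n : ℕ) : pref (n + 1) = pref n ++ [tm n] := by
  simp [pref, List.range_succ]

lemma length_pref (n : ℕ) : (pref n).length = n := by simp [pref]

lemma pref_take {j n : ℕ} (h : j ≤ n) : (pref n).take j = pref j := by
  simp [pref, List.take_range, Nat.min_eq_left h, ← List.map_take]

lemma pref_dropLast (n : ℕ) : (pref (n + 1)).dropLast = pref n := by
  rw [pref_succ, List.dropLast_concat]

lemma pal_to_fun {j n : ℕ} (hjn : j ≤ n) (hp : ((pref n).drop j).Palindrome) :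
    ∀ a b, a + b + 1 = n - j → tm (j + a) = tm (j + b) := by
  have hrev := hp.reverse_eq
  intro a b hab
  set w := (pref n).drop j with hw
  have hlw : w.length = n - j := by simp [hw, pref]
  have ha : a < w.length := by omega
  have hb : b < w.length := by omega
  have hwget : ∀ i (hi : i < w.length), w[i] = tm (j + i) := by
    intro i hi
    simp [hw, pref]
  have h2 := congrArg (fun l : List ℕ => l[a]?) hrev
  rw [List.getElem?_reverse (by omega)] at h2
  rw [List.getElem?_eq_getElem (by omega : w.length - 1 - a < w.length),
    List.getElem?_eq_getElem ha] at h2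
  have h2' := Option.some.inj h2
  rw [hwget _ (by omega), hwget _ ha] at h2'
  rw [show j + (w.length - 1 - a) = j + b by omega] at h2'
  exact h2'.symm

lemma pref_phi : ∀ m : ℕ, pref (4 * m) = phi (pref m) := by
  intro m
  induction m with
  | zero => rfl
  | succ m ih =>
    have b1 : tm (4 * m + 1) = 1 - tm m := by
      have := tm4_1 m; have := tm_le_one m; omega
    have b2 : tm (4 * m + 2) = 1 - tm m := by
      have := tm4_2 m; have := tm_le_one m; omega
    have h1 : pref (4 * (m + 1)) =
        pref (4 * m) ++ [tm (4 * m), tm (4 * m + 1), tm (4 * m + 2), tm (4 * m + 3)] := by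
      rw [show 4 * (m + 1) = (4 * m + 3) + 1 by ring, pref_succ,
        show 4 * m + 3 = (4 * m + 2) + 1 by ring, pref_succ,
        show 4 * m + 2 = (4 * m + 1) + 1 by ring, pref_succ,
        show 4 * m + 1 = (4 * m) + 1 by ring, pref_succ]
      simp
    rw [h1, pref_succ, phi_append, ih, tm4_0, tm4_3, b1, b2]
    simp [phi]

lemma pplTM_eq_Q : ∀ n, pplTM n = Q n := by
  intro n
  induction n using Nat.strong_induction_on with
  | _ n IH =>
    rcases Nat.eq_zero_or_pos n with rfl | hn
    · rw [Q_zero, pplTM_def, pref_zero, palLen_nil]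
    -- lower bound
    have hlow : Q n ≤ pplTM n := by
      have hne : pref n ≠ [] := by
        intro h
        have := length_pref n
        rw [h] at this
        simp at this
        omega
      obtain ⟨u, p, hup, hpne, hppal, hlen⟩ := exists_last_pal hne
      set j := u.length with hj
      have hjn : j ≤ n := by
        have := congrArg List.length hup
        simp [length_pref] at this
        omega
      have hu : u = pref j := by
        rw [← pref_take hjn, ← hup, List.take_left]
      have hplt : p = (pref n).drop j := by
        rw [← hup, List.drop_left]
      have hjlt : j < n := by
        have := congrArg List.length hup
        simp [length_pref] at this
        rcases p with _ | ⟨c, t⟩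
        · exact absurd rfl hpne
        · simp at this; omega
      have hfun := pal_to_fun hjn (hplt ▸ hppal)
      have hk := key2 n j hjlt hfun
      have hIHj := IH j hjlt
      rw [pplTM_def, ← hu] at hIHj
      rw [pplTM_def]
      omega
    -- upper bound
    have hup : pplTM n ≤ Q n := by
      obtain ⟨m, s, hs, rfl⟩ : ∃ m s, s < 4 ∧ n = 4 * m + s :=
        ⟨n / 4, n % 4, by omega, by omega⟩
      interval_cases s
      · -- n = 4m
        have hm : 1 ≤ m := by omega
        have hIH := IH m (by omega)
        rw [show 4 * m + 0 = 4 * m by omega] at *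
        rw [pplTM_def, pref_phi, Q0, ← hIH, pplTM_def]
        exact palLen_phi_le (pref m)
      · -- n = 4m+1
        have hIH := IH m (by omega)
        rw [pplTM_def, pref_succ, pref_phi, Q1, ← hIH, pplTM_def]
        calc palLen (phi (pref m) ++ [tm (4 * m)]) ≤ palLen (phi (pref m)) + 1 :=
              palLen_append_pal (List.Palindrome.singleton _) (by simp)
          _ ≤ palLen (pref m) + 1 := by have := palLen_phi_le (pref m); omega
      · -- n = 4m+2
        have hIHm := IH m (by omega)
        have hIHm1 := IH (m + 1) (by omega)
        have hA : pplTM (4 * m + 2) ≤ Q m + 2 := by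
          rw [pplTM_def, show 4 * m + 2 = (4 * m + 1) + 1 by omega, pref_succ,
            show 4 * m + 1 = (4 * m) + 1 by omega, pref_succ, pref_phi, ← hIHm, pplTM_def]
          have c1 : palLen ((phi (pref m) ++ [tm (4 * m)]) ++ [tm (4 * m + 1)]) ≤
              palLen (phi (pref m) ++ [tm (4 * m)]) + 1 :=
            palLen_append_pal (List.Palindrome.singleton _) (by simp)
          have c2 : palLen (phi (pref m) ++ [tm (4 * m)]) ≤ palLen (phi (pref m)) + 1 :=
            palLen_append_pal (List.Palindrome.singleton _) (by simp)
          have c3 := palLen_phi_le (pref m)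
          omega
        have hB : pplTM (4 * m + 2) ≤ Q (m + 1) + 2 := by
          have e1 : pref (4 * m + 2) = ((phi (pref (m + 1))).dropLast).dropLast := by
            rw [← pref_phi, show 4 * (m + 1) = (4 * m + 3) + 1 by ring, pref_dropLast,
              show 4 * m + 3 = (4 * m + 2) + 1 by ring, pref_dropLast]
          rw [pplTM_def, e1, ← hIHm1, pplTM_def]
          have c1 := palLen_dropLast_le ((phi (pref (m + 1))).dropLast)
          have c2 := palLen_dropLast_le (phi (pref (m + 1)))
          have c3 := palLen_phi_le (pref (m + 1))
          omega
        rw [Q2]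
        rcases le_total (Q m) (Q (m + 1)) with h | h
        · rw [min_eq_left h]; omega
        · rw [min_eq_right h]; omega
      · -- n = 4m+3
        have hIHm1 := IH (m + 1) (by omega)
        have e1 : pref (4 * m + 3) = (phi (pref (m + 1))).dropLast := by
          rw [← pref_phi, show 4 * (m + 1) = (4 * m + 3) + 1 by ring, pref_dropLast]
        rw [pplTM_def, e1, Q3, ← hIHm1, pplTM_def]
        have c1 := palLen_dropLast_le (phi (pref (m + 1)))
        have c2 := palLen_phi_le (pref (m + 1))
        omega
    omega

/-- The sequence of first differences `d(n) = PPL_t(n+1) − PPL_t(n)` takes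
values in `{−1, 0, 1}` and is the fixed point of a 4-uniform morphism:
`d(4n) = 1`, `d(4n+1) = min(d(n), 0) + 1`, `d(4n+2) = max(d(n), 0) − 1`, and
`d(4n+3) = −1`. -/
theorem pplTM_first_differences_morphic (d : ℕ → ℤ)
    (hd : ∀ n, d n = (pplTM (n + 1) : ℤ) - (pplTM n : ℤ)) :
    ∀ n, d n ∈ ({-1, 0, 1} : Set ℤ) ∧
      d (4 * n) = 1 ∧
      d (4 * n + 1) = min (d n) 0 + 1 ∧
      d (4 * n + 2) = max (d n) 0 - 1 ∧
      d (4 * n + 3) = -1 := by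
  intro n
  have hQ : ∀ k, pplTM k = Q k := pplTM_eq_Q
  have hdQn : d n = (Q (n + 1) : ℤ) - (Q n : ℤ) := by rw [hd n, hQ, hQ]
  have hlip := Q_lip n
  have h0 : d (4 * n) = 1 := by
    rw [hd (4 * n), hQ, hQ, show 4 * n + 1 = 4 * n + 1 from rfl, Q1, Q0]
    push_cast; ring
  have h1 : d (4 * n + 1) = min (d n) 0 + 1 := by
    rw [hd (4 * n + 1), hQ, hQ, show 4 * n + 1 + 1 = 4 * n + 2 by omega, Q2, Q1, hdQn]
    rcases le_total (Q n) (Q (n + 1)) with h | h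
    · rw [min_eq_left h, min_eq_right (by push_cast; omega : (0:ℤ) ≤ (Q (n+1) : ℤ) - Q n)]
      push_cast; ring
    · rw [min_eq_right h, min_eq_left (by push_cast; omega : ((Q (n+1) : ℤ) - Q n) ≤ 0)]
      push_cast; ring
  have h2 : d (4 * n + 2) = max (d n) 0 - 1 := by
    rw [hd (4 * n + 2), hQ, hQ, show 4 * n + 2 + 1 = 4 * n + 3 by omega, Q3, Q2, hdQn]
    rcases le_total (Q n) (Q (n + 1)) with h | h
    · rw [min_eq_left h, max_eq_left (by push_cast; omega : (0:ℤ) ≤ (Q (n+1) : ℤ) - Q n)]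
      push_cast; ring
    · rw [min_eq_right h, max_eq_right (by push_cast; omega : ((Q (n+1) : ℤ) - Q n) ≤ 0)]
      push_cast; ring
  have h3 : d (4 * n + 3) = -1 := by
    rw [hd (4 * n + 3), hQ, hQ, show 4 * n + 3 + 1 = 4 * (n + 1) by omega, Q0, Q3]
    push_cast; ring
  refine ⟨?_, h0, h1, h2, h3⟩
  simp only [Set.mem_insert_iff, Set.mem_singleton_iff]
  rw [hdQn]
  omega
end
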